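/- Every torsion-free virtually cyclic group is either trivial or infinite cyclic. -/

import Mathlib

open scoped commutatorElement

private lemma aux_comm_left {G : Type*} [Group G] (a c z : G) (hz : z * c = c * z) :
    ⁅a * z, c⁆ = ⁅a, c⁆ := by
  have h : z * c * z⁻¹ = c := by rw [hz, mul_inv_cancel_right]
  calc ⁅a * z, c⁆ = a * (z * c * z⁻¹) * a⁻¹ * c⁻¹ := by
        rw [commutatorElement_def]; group
    _ = ⁅a, c⁆ := by rw [h, commutatorElement_def]

private lemma aux_comm_right {G : Type*} [Group G] (a b w : G) (hw : w * a⁻¹ = a⁻¹ * w) :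
    ⁅a, b * w⁆ = ⁅a, b⁆ := by
  have h : w * a⁻¹ * w⁻¹ = a⁻¹ := by rw [hw, mul_inv_cancel_right]
  calc ⁅a, b * w⁆ = a * b * (w * a⁻¹ * w⁻¹) * b⁻¹ := by
        rw [commutatorElement_def]; group
    _ = ⁅a, b⁆ := by rw [h, commutatorElement_def]

private lemma aux_finite_commutatorSet {G : Type*} [Group G]
    [(Subgroup.center G).FiniteIndex] : Finite (commutatorSet G) := by
  set Z := Subgroup.center G
  have hsub : commutatorSet G ⊆ Set.range
      (fun p : (G ⧸ Z) × (G ⧸ Z) => ⁅(p.1.out : G), (p.2.out : G)⁆) := by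
    rintro x ⟨a, b, rfl⟩
    refine ⟨(↑a, ↑b), ?_⟩
    obtain ⟨z, hz⟩ := QuotientGroup.mk_out_eq_mul Z a
    obtain ⟨w, hw⟩ := QuotientGroup.mk_out_eq_mul Z b
    simp only [hz, hw]
    rw [aux_comm_left _ _ _ (Subgroup.mem_center_iff.mp z.2 _).symm,
      aux_comm_right _ _ _ (Subgroup.mem_center_iff.mp w.2 _).symm]
  exact (Set.Finite.subset (Set.finite_range _) hsub).to_subtype

private lemma aux_comm_of_center_finiteIndex {G : Type*} [Group G]
    (hTF : ∀ g : G, g ≠ 1 → ¬IsOfFinOrder g) [(Subgroup.center G).FiniteIndex] :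
    ∀ a b : G, a * b = b * a := by
  haveI : Finite (commutatorSet G) := aux_finite_commutatorSet
  haveI : Finite (_root_.commutator G) := inferInstance
  intro a b
  rw [← commutatorElement_eq_one_iff_mul_comm]
  by_contra hne
  have hmem : ⁅a, b⁆ ∈ _root_.commutator G := by
    rw [commutator_def]
    exact Subgroup.commutator_mem_commutator (Subgroup.mem_top a) (Subgroup.mem_top b)
  have h1 : IsOfFinOrder (⟨⁅a, b⁆, hmem⟩ : _root_.commutator G) := isOfFinOrder_of_finite _
  obtain ⟨n, hn0, hn1⟩ := isOfFinOrder_iff_pow_eq_one.mp h1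
  refine hTF ⁅a, b⁆ hne (isOfFinOrder_iff_pow_eq_one.mpr ⟨n, hn0, ?_⟩)
  have := congrArg (Subtype.val) hn1
  simpa using this

/-- Every torsion-free virtually cyclic group is either trivial or infinite cyclic. -/
theorem torsionFree_virtuallyCyclic_trivial_or_infinite_cyclic
    {G : Type*} [Group G] (hTF : ∀ g : G, g ≠ 1 → ¬IsOfFinOrder g)
    (H : Subgroup G) (hcyc : IsCyclic H) (hfi : H.FiniteIndex) :
    Subsingleton G ∨ Nonempty (G ≃* Multiplicative ℤ) := by
  haveI := hfi
  by_cases hfin : Finite G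
  · left
    refine ⟨fun a b => ?_⟩
    have ha : a = 1 := by
      by_contra h; exact hTF a h (isOfFinOrder_of_finite a)
    have hb : b = 1 := by
      by_contra h; exact hTF b h (isOfFinOrder_of_finite b)
    rw [ha, hb]
  · right
    haveI : Infinite G := not_finite_iff_infinite.mp hfin
    set N := H.normalCore with hN
    haveI : N.Normal := H.normalCore_normal
    haveI : N.FiniteIndex := inferInstance
    -- N is cyclic
    haveI : IsCyclic H := hcyc
    have hNcyc : IsCyclic N :=
      isCyclic_of_surjective _ (Subgroup.subgroupOfEquivOfLe H.normalCore_le).surjective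
    obtain ⟨g, hg⟩ := hNcyc.exists_generator
    set b : G := (g : G) with hbdef
    have hbN : N = Subgroup.zpowers b := by
      ext x
      constructor
      · intro hx
        obtain ⟨k, hk⟩ := hg ⟨x, hx⟩
        exact Subgroup.mem_zpowers_iff.mpr ⟨k, by
          have := congrArg (Subtype.val) hk
          simpa using this⟩
      · rintro ⟨k, rfl⟩
        exact N.zpow_mem g.2 k
    -- b ≠ 1 (else N = ⊥ and G finite)
    have hb1 : b ≠ 1 := by
      intro hb
      have : N = ⊥ := by
        rw [hbN, hb, Subgroup.zpowers_one_eq_bot]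
      have hbot : (⊥ : Subgroup G).FiniteIndex := this ▸ ‹N.FiniteIndex›
      have : Nat.card G ≠ 0 := by
        rw [← Subgroup.index_bot]; exact hbot.index_ne_zero
      exact this (Nat.card_eq_zero_of_infinite)
    have hbord : ¬ IsOfFinOrder b := hTF b hb1
    -- b is central
    have hcent : ∀ t : G, t * b = b * t := by
      intro t
      have hbmem : b ∈ N := g.2
      have h1 : t * b * t⁻¹ ∈ N := (‹N.Normal›).conj_mem b hbmem t
      rw [hbN, Subgroup.mem_zpowers_iff] at h1
      obtain ⟨k, hk⟩ := h1
      -- some positive power of t lies in N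
      have h2 : IsOfFinOrder ((t : G ⧸ N) : G ⧸ N) := isOfFinOrder_of_finite _
      obtain ⟨m, hm0, hm1⟩ := isOfFinOrder_iff_pow_eq_one.mp h2
      have hmN : t ^ m ∈ N := by
        rwa [← QuotientGroup.eq_one_iff, QuotientGroup.mk_pow]
      rw [hbN, Subgroup.mem_zpowers_iff] at hmN
      obtain ⟨l, hl⟩ := hmN
      have hcomm : t * b ^ l * t⁻¹ = b ^ l := by
        rw [hl]; group
      have h3 : t * b ^ l * t⁻¹ = b ^ (k * l) := by
        rw [zpow_mul, hk, conj_zpow]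
      have h4 : b ^ (k * l) = b ^ l := by rw [← h3]; exact hcomm
      have h5 : k * l = l := injective_zpow_iff_not_isOfFinOrder.mpr hbord h4
      have h6 : (k - 1) * l = 0 := by ring_nf; omega
      rcases mul_eq_zero.mp h6 with hk1 | hl0
      · have hk1' : k = 1 := by omega
        have : t * b * t⁻¹ = b := by rw [← hk, hk1', zpow_one]
        calc t * b = t * b * t⁻¹ * t := by group
          _ = b * t := by rw [this]
      · have htm : t ^ m = 1 := by rw [← hl, hl0, zpow_zero]
        have ht1 : t = 1 := by
          by_contra h
          exact hTF t h (isOfFinOrder_iff_pow_eq_one.mpr ⟨m, hm0, htm⟩)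
        rw [ht1, one_mul, mul_one]
    -- center has finite index
    have hle : N ≤ Subgroup.center G := by
      rw [hbN, Subgroup.zpowers_le]
      exact Subgroup.mem_center_iff.mpr hcent
    haveI : (Subgroup.center G).FiniteIndex := Subgroup.finiteIndex_of_le hle
    have hcomm : ∀ a b : G, a * b = b * a := aux_comm_of_center_finiteIndex hTF
    -- G is abelian, so H is normal and x ↦ x ^ index is an injective hom into H
    haveI : H.Normal := ⟨fun x hx gg => by
      rw [hcomm gg x, mul_assoc, mul_inv_cancel, mul_one]; exact hx⟩
    set n := H.index with hn
    have hn0 : n ≠ 0 := hfi.index_ne_zero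
    let φ : G →* H :=
      { toFun := fun x => ⟨x ^ n, H.pow_index_mem x⟩
        map_one' := by ext; simp
        map_mul' := fun x y => by
          ext
          simpa using (Commute.mul_pow (hcomm x y) n : (x * y) ^ n = _) }
    have hinj : Function.Injective φ := by
      rw [injective_iff_map_eq_one]
      intro x hx
      have hxn : x ^ n = 1 := by
        have := congrArg (Subtype.val) hx
        simpa [φ] using this
      by_contra h
      exact hTF x h (isOfFinOrder_iff_pow_eq_one.mpr ⟨n, Nat.pos_of_ne_zero hn0, hxn⟩)
    haveI : IsCyclic φ.range := Subgroup.isCyclic _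
    have e1 : G ≃* φ.range := MonoidHom.ofInjective hinj
    haveI hGc : IsCyclic G := isCyclic_of_surjective e1.symm e1.symm.surjective
    have hcard : Nat.card G = 0 := Nat.card_eq_zero_of_infinite
    have e2 : Multiplicative (ZMod (Nat.card G)) ≃* Multiplicative ℤ := by
      rw [hcard]; exact MulEquiv.refl _
    exact ⟨(zmodCyclicMulEquiv hGc).symm.trans e2⟩
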